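/- Let (Ω, 𝒜, p) be a probability space, let S be a finite-dimensional subspace of L²(Ω, p; ℝ) with orthogonal projection P : L²(Ω,p;ℝ) → S, let d ≥ 1, let ω ∈ ℝ^d with ‖ω‖ = 1, and let v, w ∈ L²(Ω, p; ℝ^d). Define g(z) = ‖v(z) − w(z)‖ and the projected post-collisional velocities v'(z) = (v(z)+w(z))/2 + (1/2)(P g)(z)·ω and w'(z) = (v(z)+w(z))/2 − (1/2)(P g)(z)·ω. Then: (i) v'(z) + w'(z) = v(z) + w(z) for every z (momentum is conserved pointwise in the random parameter, hence mode by mode in any orthonormal basis of S); and (ii) ∫_Ω (‖v'(z)‖² + ‖w'(z)‖²) p(dz) ≤ ∫_Ω (‖v(z)‖² + ‖w(z)‖²) p(dz), with equality if and only if g ∈ S. -/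

import Mathlib

open MeasureTheory

set_option maxHeartbeats 1600000 in
/-- gPC-projected Maxwell collision: replacing the relative speed by its
orthogonal projection onto a finite-dimensional subspace S of L²(Ω,p) conserves
momentum pointwise in the random parameter and makes the expected kinetic
energy non-increasing, with conservation exactly when the relative speed
already belongs to S. -/
theorem stmt_15 {Ω : Type*} [MeasurableSpace Ω] (p : Measure Ω)
    [IsProbabilityMeasure p]
    (S : Submodule ℝ (Lp ℝ 2 p)) [FiniteDimensional ℝ S]
    (d : ℕ) (hd : 1 ≤ d) (ω : EuclideanSpace ℝ (Fin d)) (hω : ‖ω‖ = 1)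
    (v w : Ω → EuclideanSpace ℝ (Fin d))
    (hv : MemLp v 2 p) (hw : MemLp w 2 p)
    (g : Lp ℝ 2 p) (hg : g =ᵐ[p] fun z => ‖v z - w z‖)
    (Pg : Ω → ℝ) (hPg : Pg = ((S.orthogonalProjectionOnto g : Lp ℝ 2 p) : Ω → ℝ))
    (v' w' : Ω → EuclideanSpace ℝ (Fin d))
    (hv' : ∀ z, v' z = (1 / 2 : ℝ) • (v z + w z) + (Pg z / 2) • ω)
    (hw' : ∀ z, w' z = (1 / 2 : ℝ) • (v z + w z) - (Pg z / 2) • ω) :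
    (∀ z, v' z + w' z = v z + w z) ∧
    (∫ z, (‖v' z‖ ^ 2 + ‖w' z‖ ^ 2) ∂p) ≤ (∫ z, (‖v z‖ ^ 2 + ‖w z‖ ^ 2) ∂p) ∧
    ((∫ z, (‖v' z‖ ^ 2 + ‖w' z‖ ^ 2) ∂p) = (∫ z, (‖v z‖ ^ 2 + ‖w z‖ ^ 2) ∂p)
      ↔ g ∈ S) := by
  set q : Lp ℝ 2 p := (S.orthogonalProjectionOnto g : Lp ℝ 2 p) with hqdef
  -- ∫ f² = ‖f‖² for f ∈ L²
  have hnorm : ∀ f : Lp ℝ 2 p, ∫ z, (f z) ^ 2 ∂p = ‖f‖ ^ 2 := by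
    intro f
    have h := L2.inner_def (𝕜 := ℝ) f f
    simp only [RCLike.inner_apply, conj_trivial] at h
    rw [← real_inner_self_eq_norm_sq, h]
    simp [sq]
  -- pointwise energy identity for the post-collisional velocities
  have key : ∀ z, ‖v' z‖ ^ 2 + ‖w' z‖ ^ 2
      = (1 / 2) * ‖v z + w z‖ ^ 2 + (1 / 2) * (Pg z) ^ 2 := by
    intro z
    rw [hv' z, hw' z]
    have hpar := norm_add_sq_real ((1 / 2 : ℝ) • (v z + w z)) ((Pg z / 2) • ω)
    have hpar2 := norm_sub_sq_real ((1 / 2 : ℝ) • (v z + w z)) ((Pg z / 2) • ω)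
    have h2 : ‖(1 / 2 : ℝ) • (v z + w z)‖ = (1 / 2) * ‖v z + w z‖ := by
      rw [norm_smul]; norm_num
    have h3 : ‖(Pg z / 2) • ω‖ = |Pg z| / 2 := by
      rw [norm_smul, hω, Real.norm_eq_abs, abs_div]; norm_num
    rw [hpar, hpar2, h2, h3]
    nlinarith [sq_abs (Pg z)]
  -- pointwise energy identity for the pre-collisional velocities
  have key2 : ∀ z, ‖v z‖ ^ 2 + ‖w z‖ ^ 2
      = (1 / 2) * ‖v z + w z‖ ^ 2 + (1 / 2) * ‖v z - w z‖ ^ 2 := by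
    intro z
    have hpar := norm_add_sq_real (v z) (w z)
    have hpar2 := norm_sub_sq_real (v z) (w z)
    nlinarith
  -- integrability
  have hIA : Integrable (fun z => ‖v z + w z‖ ^ 2) p := (hv.add hw).norm.integrable_sq
  have hPgm : MemLp Pg 2 p := by rw [hPg]; exact Lp.memLp _
  have hIB : Integrable (fun z => (Pg z) ^ 2) p := hPgm.integrable_sq
  have hIC : Integrable (fun z => ‖v z - w z‖ ^ 2) p := (hv.sub hw).norm.integrable_sq
  -- value of the post-collisional energy
  have hL : (∫ z, (‖v' z‖ ^ 2 + ‖w' z‖ ^ 2) ∂p)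
      = (1 / 2) * (∫ z, ‖v z + w z‖ ^ 2 ∂p) + (1 / 2) * ‖q‖ ^ 2 := by
    have h0 : ∫ z, (‖v' z‖ ^ 2 + ‖w' z‖ ^ 2) ∂p
        = ∫ z, ((1 / 2) * ‖v z + w z‖ ^ 2 + (1 / 2) * (Pg z) ^ 2) ∂p := by
      exact integral_congr_ae (Filter.Eventually.of_forall key)
    rw [h0, integral_add (hIA.const_mul _) (hIB.const_mul _),
      integral_const_mul, integral_const_mul]
    congr 1
    have hq2 : ∫ z, (Pg z) ^ 2 ∂p = ‖q‖ ^ 2 := by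
      rw [show (fun z => (Pg z) ^ 2) = fun z => (q z) ^ 2 by rw [hPg, hqdef]]
      exact hnorm q
    rw [hq2]
  -- value of the pre-collisional energy
  have hgsq : ∫ z, ‖v z - w z‖ ^ 2 ∂p = ‖g‖ ^ 2 := by
    have : (fun z => (g z) ^ 2) =ᵐ[p] fun z => ‖v z - w z‖ ^ 2 :=
      hg.mono fun z h => by simp only [h]
    rw [← integral_congr_ae this, hnorm g]
  have hR : (∫ z, (‖v z‖ ^ 2 + ‖w z‖ ^ 2) ∂p)
      = (1 / 2) * (∫ z, ‖v z + w z‖ ^ 2 ∂p) + (1 / 2) * ‖g‖ ^ 2 := by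
    have h0 : ∫ z, (‖v z‖ ^ 2 + ‖w z‖ ^ 2) ∂p
        = ∫ z, ((1 / 2) * ‖v z + w z‖ ^ 2 + (1 / 2) * ‖v z - w z‖ ^ 2) ∂p :=
      integral_congr_ae (Filter.Eventually.of_forall key2)
    rw [h0, integral_add (hIA.const_mul _) (hIC.const_mul _),
      integral_const_mul, integral_const_mul, hgsq]
  -- Pythagoras for the orthogonal projection
  have horth : (inner ℝ q (g - q) : ℝ) = 0 :=
    Submodule.inner_right_of_mem_orthogonal (SetLike.coe_mem _)
      (S.sub_starProjection_mem_orthogonal g)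
  have hpyth : ‖g‖ ^ 2 = ‖q‖ ^ 2 + ‖g - q‖ ^ 2 := by
    have h := norm_add_sq_real q (g - q)
    rw [horth] at h
    simpa using h
  refine ⟨fun z => by rw [hv' z, hw' z]; module, ?_, ?_⟩
  · rw [hL, hR]
    linarith [hpyth, sq_nonneg ‖g - q‖]
  · rw [hL, hR]
    constructor
    · intro h
      have hq : ‖g - q‖ ^ 2 = 0 := by linarith [hpyth]
      have : g - q = 0 := by
        rw [← norm_eq_zero]
        nlinarith [norm_nonneg (g - q)]
      have hgq : (S.orthogonalProjectionOnto g : Lp ℝ 2 p) = g := by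
        rw [← hqdef]; exact (sub_eq_zero.mp this).symm
      exact S.starProjection_eq_self_iff.mp hgq
    · intro h
      have hgq : q = g := S.starProjection_eq_self_iff.mpr h
      rw [hgq]
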